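/- Fix k ≥ 3. The set Sₖ = {(a,b) ∈ Aₖ² : neither a ⪯ b nor b ⪯ a} is a subuniverse of (Aₖ, w^A)²: whenever (a₁,b₁),…,(aₖ,bₖ) ∈ Sₖ, also (w^A(a₁,…,aₖ), w^A(b₁,…,bₖ)) ∈ Sₖ. -/

import Mathlib

/-- Formal terms built from variables in `V` and a single `k`-ary operation symbol `w`. -/
inductive TermK (k : ℕ) (V : Type) : Type
  | var : V → TermK k V
  | w : (Fin k → TermK k V) → TermK k V

/-- Evaluation of a term in an algebra `(B, f)` under a variable assignment `σ`. -/
def TermK.eval {k : ℕ} {V B : Type} (f : (Fin k → B) → B) (σ : V → B) : TermK k V → B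
  | .var v => σ v
  | .w ts => f (fun i => (ts i).eval f σ)

/-- Renaming/substitution of variables in a term. -/
def TermK.rename {k : ℕ} {V V' : Type} (ρ : V → V') : TermK k V → TermK k V'
  | .var v => .var (ρ v)
  | .w ts => .w (fun i => (ts i).rename ρ)

/-- A `k`-ary operation `f` satisfies the `k`-wnu identities: `f(x,…,x) = x` and
the value of `f` on a tuple with a single `y` among `x`'s does not depend on the
position of the `y`. -/
def IsKWNU {k : ℕ} {B : Type} (f : (Fin k → B) → B) : Prop :=
  (∀ x, f (fun _ => x) = x) ∧
  ∀ (x y : B) (i j : Fin k),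
    f (Function.update (fun _ => x) i y) = f (Function.update (fun _ => x) j y)

/-- Two terms are equal modulo the equational theory generated by the `k`-wnu identities,
i.e. they evaluate equally in every algebra satisfying the `k`-wnu identities. -/
def EqWnuK {k : ℕ} {V : Type} (t s : TermK k V) : Prop :=
  ∀ (B : Type) (f : (Fin k → B) → B) (σ : V → B), IsKWNU f → t.eval f σ = s.eval f σ

/-- The set `Aₖ` of `k`-wnu normal forms (over the countably infinite variable set `ℕ`):
every variable is a normal form, and `w(a₁,…,aₖ)` is a normal form whenever
`a₁,…,aₖ` are normal forms and there are two distinct indices `i, j` with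
`a₁ ≠ aᵢ` and `a₁ ≠ aⱼ`. -/
inductive IsNFK {k : ℕ} [NeZero k] : TermK k ℕ → Prop
  | var (n : ℕ) : IsNFK (.var n)
  | w (ts : Fin k → TermK k ℕ) : (∀ i, IsNFK (ts i)) →
      (∃ i j : Fin k, i ≠ j ∧ ts 0 ≠ ts i ∧ ts 0 ≠ ts j) → IsNFK (.w ts)

open Classical in
/-- The normal-form operation `w^A` on `k`-ary terms:
`w^A(a,…,a) = a`; if some coordinate is `c` and all the others equal `d ≠ c` then the
value is `w(c,d,…,d)`; otherwise `w^A(a₁,…,aₖ) = w(a₁,…,aₖ)`. -/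
noncomputable def wAK {k : ℕ} [NeZero k] (ts : Fin k → TermK k ℕ) : TermK k ℕ :=
  if ∀ i, ts i = ts 0 then ts 0
  else if h : ∃ icd : Fin k × TermK k ℕ × TermK k ℕ,
      icd.2.1 ≠ icd.2.2 ∧ ∀ j, ts j = if j = icd.1 then icd.2.1 else icd.2.2 then
    TermK.w (fun l => if l = 0 then h.choose.2.1 else h.choose.2.2)
  else TermK.w ts

/-- The subterm relation `⪯` on `k`-wnu normal forms: the reflexive transitive closure of
`{(a,b) : a,b ∈ Aₖ, ∃ c₁,…,cₖ ∈ Aₖ, b = w(c₁,…,cₖ) ∧ a ∈ {c₁,…,cₖ}}`. -/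
def SubK {k : ℕ} [NeZero k] (a b : TermK k ℕ) : Prop :=
  Relation.ReflTransGen
    (fun s t => IsNFK s ∧ IsNFK t ∧ ∃ cs : Fin k → TermK k ℕ,
      (∀ i, IsNFK (cs i)) ∧ t = .w cs ∧ ∃ i, s = cs i) a b

/-- The relation `Sₖ = {(a,b) ∈ Aₖ² : neither a ⪯ b nor b ⪯ a}`. -/
def SK {k : ℕ} [NeZero k] (a b : TermK k ℕ) : Prop :=
  IsNFK a ∧ IsNFK b ∧ ¬ SubK a b ∧ ¬ SubK b a

section Aux
variable {k : ℕ} [NeZero k]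

lemma wAK_trichotomy (ts : Fin k → TermK k ℕ) :
    ((∀ i, ts i = ts 0) ∧ wAK ts = ts 0) ∨
    (∃ (i : Fin k) (c d : TermK k ℕ), c ≠ d ∧ (∀ j, ts j = if j = i then c else d) ∧
      wAK ts = .w (fun l => if l = 0 then c else d)) ∨
    ((¬ ∀ i, ts i = ts 0) ∧
      (¬ ∃ icd : Fin k × TermK k ℕ × TermK k ℕ,
        icd.2.1 ≠ icd.2.2 ∧ ∀ j, ts j = if j = icd.1 then icd.2.1 else icd.2.2) ∧
      wAK ts = .w ts) := by
  unfold wAK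
  split_ifs with h1 h2
  · exact Or.inl ⟨h1, rfl⟩
  · exact Or.inr (Or.inl ⟨h2.choose.1, h2.choose.2.1, h2.choose.2.2,
      h2.choose_spec.1, h2.choose_spec.2, rfl⟩)
  · exact Or.inr (Or.inr ⟨h1, h2, rfl⟩)

lemma exists_ne_ne (hk : 3 ≤ k) (a b : Fin k) : ∃ j : Fin k, j ≠ a ∧ j ≠ b := by
  set v : ℕ := if a.val ≠ 0 ∧ b.val ≠ 0 then 0 else if a.val ≠ 1 ∧ b.val ≠ 1 then 1 else 2 with hv
  have hvk : v < k := by rw [hv]; split_ifs <;> omega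
  have hva : v ≠ a.val ∧ v ≠ b.val := by
    rw [hv]; split_ifs <;> omega
  exact ⟨⟨v, hvk⟩, by simp [Fin.ext_iff, hva.1], by simp [Fin.ext_iff, hva.2]⟩

lemma subK_step {a b : TermK k ℕ} (ha : IsNFK a) (hb : IsNFK b)
    (cs : Fin k → TermK k ℕ) (hcs : ∀ i, IsNFK (cs i)) (hb' : b = .w cs) (i : Fin k)
    (hai : a = cs i) : SubK a b :=
  Relation.ReflTransGen.single ⟨ha, hb, cs, hcs, hb', i, hai⟩

lemma pattern_NF (hk : 3 ≤ k) {ts : Fin k → TermK k ℕ} (h : ∀ i, IsNFK (ts i))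
    {i : Fin k} {c d : TermK k ℕ} (hp : ∀ j, ts j = if j = i then c else d) :
    IsNFK c ∧ IsNFK d := by
  have hc : IsNFK c := by have := h i; rwa [hp i, if_pos rfl] at this
  obtain ⟨j, hj, -⟩ := exists_ne_ne hk i i
  have hd : IsNFK d := by have := h j; rwa [hp j, if_neg hj] at this
  exact ⟨hc, hd⟩

lemma isNFK_wAK (hk : 3 ≤ k) (ts : Fin k → TermK k ℕ) (h : ∀ i, IsNFK (ts i)) :
    IsNFK (wAK ts) := by
  rcases wAK_trichotomy ts with ⟨_, he⟩ | ⟨i, c, d, hcd, hp, he⟩ | ⟨h1, h2, he⟩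
  · rw [he]; exact h 0
  · rw [he]
    obtain ⟨hc, hd⟩ := pattern_NF hk h hp
    refine IsNFK.w _ (fun l => ?_) ?_
    · split_ifs <;> assumption
    · refine ⟨⟨1, by omega⟩, ⟨2, by omega⟩, by simp [Fin.ext_iff], ?_, ?_⟩ <;>
        simpa [Fin.ext_iff] using hcd
  · rw [he]
    refine IsNFK.w _ h ?_
    push_neg at h1
    obtain ⟨i, hi⟩ := h1
    by_cases hex : ∃ i', i' ≠ i ∧ ts i' ≠ ts 0
    · obtain ⟨i', hii', hti'⟩ := hex
      exact ⟨i, i', Ne.symm hii', Ne.symm hi, Ne.symm hti'⟩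
    · push_neg at hex
      exact absurd ⟨(i, ts i, ts 0), hi, fun j => by
        by_cases hji : j = i
        · simp [hji]
        · simp [hji, hex j hji]⟩ h2

lemma subK_comp_wAK (hk : 3 ≤ k) (ts : Fin k → TermK k ℕ) (h : ∀ i, IsNFK (ts i))
    (j : Fin k) : SubK (ts j) (wAK ts) := by
  have hNF := isNFK_wAK hk ts h
  rcases wAK_trichotomy ts with ⟨hall, he⟩ | ⟨i, c, d, hcd, hp, he⟩ | ⟨h1, h2, he⟩
  · rw [he, ← hall j]
    exact Relation.ReflTransGen.refl
  · obtain ⟨hc, hd⟩ := pattern_NF hk h hp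
    refine subK_step (h j) hNF _ (fun l => ?_) he
      (if j = i then 0 else ⟨1, by omega⟩) ?_
    · split_ifs <;> assumption
    · rw [hp j]; by_cases hji : j = i <;> simp [hji, Fin.ext_iff]
  · exact subK_step (h j) hNF ts h he j rfl

lemma wAK_ne (hk : 3 ≤ k) (as bs : Fin k → TermK k ℕ) (h : ∀ i, SK (as i) (bs i)) :
    wAK as ≠ wAK bs := by
  intro he
  have hNa : ∀ i, IsNFK (as i) := fun i => (h i).1
  have hNb : ∀ i, IsNFK (bs i) := fun i => (h i).2.1
  rcases wAK_trichotomy as with ⟨ha1, hea⟩ | ⟨ia, ca, da, hcda, hpa, hea⟩ | ⟨ha1, ha2, hea⟩ <;>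
    rcases wAK_trichotomy bs with ⟨hb1, heb⟩ | ⟨ib, cb, db, hcdb, hpb, heb⟩ | ⟨hb1, hb2, heb⟩ <;>
    rw [hea, heb] at he
  -- (1,1)
  · exact (h 0).2.2.1 (he ▸ Relation.ReflTransGen.refl)
  -- (1,2)
  · obtain ⟨hcb, hdb⟩ := pattern_NF hk hNb hpb
    have hsub : SubK (bs ib) (as ib) := by
      rw [ha1 ib]
      refine subK_step (hNb ib) (hNa 0) _ (fun l => ?_) he 0 (by simp [hpb ib])
      split_ifs <;> assumption
    exact (h ib).2.2.2 hsub
  -- (1,3)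
  · exact (h 0).2.2.2 (subK_step (hNb 0) (hNa 0) bs hNb he 0 rfl)
  -- (2,1)
  · obtain ⟨hca, hda⟩ := pattern_NF hk hNa hpa
    have hsub : SubK (as ia) (bs ia) := by
      rw [hb1 ia]
      refine subK_step (hNa ia) (hNb 0) _ (fun l => ?_) he.symm 0 (by simp [hpa ia])
      split_ifs <;> assumption
    exact (h ia).2.2.1 hsub
  -- (2,2)
  · have hfe : (fun l : Fin k => if l = 0 then ca else da)
        = (fun l : Fin k => if l = 0 then cb else db) := by injection he
    have hce : ca = cb := by simpa using congrFun hfe 0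
    have hde : da = db := by
      have := congrFun hfe ⟨1, by omega⟩
      simpa [Fin.ext_iff] using this
    obtain ⟨j, hja, hjb⟩ := exists_ne_ne hk ia ib
    have : as j = bs j := by rw [hpa j, hpb j, if_neg hja, if_neg hjb, hde]
    exact (h j).2.2.1 (this ▸ Relation.ReflTransGen.refl)
  -- (2,3)
  · have hfe : bs = (fun l : Fin k => if l = 0 then ca else da) := (TermK.w.inj he).symm
    exact hb2 ⟨(0, ca, da), hcda, fun j => by rw [hfe]⟩
  -- (3,1)
  · exact (h 0).2.2.1 (subK_step (hNa 0) (hNb 0) as hNa he.symm 0 rfl)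
  -- (3,2)
  · have hfe : as = (fun l : Fin k => if l = 0 then cb else db) := TermK.w.inj he
    exact ha2 ⟨(0, cb, db), hcdb, fun j => by rw [hfe]⟩
  -- (3,3)
  · have hfe : as = bs := TermK.w.inj he
    exact (h 0).2.2.1 ((congrFun hfe 0) ▸ Relation.ReflTransGen.refl)

lemma not_subK_wAK (hk : 3 ≤ k) (as bs : Fin k → TermK k ℕ) (h : ∀ i, SK (as i) (bs i)) :
    ¬ SubK (wAK as) (wAK bs) := by
  intro hsub
  have hNa : ∀ i, IsNFK (as i) := fun i => (h i).1
  have hNb : ∀ i, IsNFK (bs i) := fun i => (h i).2.1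
  rcases wAK_trichotomy bs with ⟨hb1, heb⟩ | ⟨ib, cb, db, hcdb, hpb, heb⟩ | ⟨hb1, hb2, heb⟩
  · have : SubK (as 0) (bs 0) :=
      Relation.ReflTransGen.trans (subK_comp_wAK hk as hNa 0) (heb ▸ hsub)
    exact (h 0).2.2.1 this
  · rcases hsub.cases_tail with he | ⟨c, hc1, hc2⟩
    · exact wAK_ne hk as bs h he.symm
    · obtain ⟨-, -, cs, hcs, hwb, i, hci⟩ := hc2
      rw [heb] at hwb
      have hcs_eq : cs = fun l => if l = 0 then cb else db := (TermK.w.inj hwb).symm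
      have hm : ∃ m, c = bs m := by
        rw [hci, hcs_eq]
        by_cases hi0 : i = 0
        · exact ⟨ib, by simp [hi0, hpb ib]⟩
        · obtain ⟨m, hm1, -⟩ := exists_ne_ne hk ib ib
          exact ⟨m, by simp [hi0, hpb m, hm1]⟩
      obtain ⟨m, hmc⟩ := hm
      exact (h m).2.2.1 ((subK_comp_wAK hk as hNa m).trans (hmc ▸ hc1))
  · rcases hsub.cases_tail with he | ⟨c, hc1, hc2⟩
    · exact wAK_ne hk as bs h he.symm
    · obtain ⟨-, -, cs, hcs, hwb, i, hci⟩ := hc2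
      rw [heb] at hwb
      have hcs_eq : cs = bs := (TermK.w.inj hwb).symm
      have hmc : c = bs i := by rw [hci, hcs_eq]
      exact (h i).2.2.1 ((subK_comp_wAK hk as hNa i).trans (hmc ▸ hc1))

end Aux

/-- Fix `k ≥ 3`. The set `Sₖ` is a subuniverse of `(Aₖ, w^A)²`: whenever
`(a₁,b₁),…,(aₖ,bₖ) ∈ Sₖ`, also `(w^A(a₁,…,aₖ), w^A(b₁,…,bₖ)) ∈ Sₖ`. -/
theorem statement17 {k : ℕ} [NeZero k] (hk : 3 ≤ k)
    (as bs : Fin k → TermK k ℕ) (h : ∀ i, SK (as i) (bs i)) :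
    SK (wAK as) (wAK bs) := by
  have hsymm : ∀ i, SK (bs i) (as i) := fun i => ⟨(h i).2.1, (h i).1, (h i).2.2.2, (h i).2.2.1⟩
  exact ⟨isNFK_wAK hk as (fun i => (h i).1), isNFK_wAK hk bs (fun i => (h i).2.1),
    not_subK_wAK hk as bs h, not_subK_wAK hk bs as hsymm⟩
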